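/- Under the finite-atom assumption on L_#μ, the pushforward measure Φ_#μ on [0,1] equals the sum of the point masses Σ_{i=1}^N Δ_i · δ_{α_i} and the restriction of Lebesgue measure to the set [0,1] \ ⋃_{i=1}^N [α_i, α_i + Δ_i]. Equivalently, Φ_#μ([0,α]) = α_i + Δ_i for α ∈ [α_i, α_i + Δ_i) and Φ_#μ([0,α]) = α otherwise. -/

import Mathlib

open MeasureTheory Set

/-- The survival function `X(l) = mu {z : L z > l}` (as a real number). -/
noncomputable def survival {α : Type*} [MeasurableSpace α] (μ : Measure α) (L : α → ℝ)
    (lam : ℝ) : ℝ :=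
  (μ {z | lam < L z}).toReal

/-- The generalized inverse `Ltilde (ξ) = sup {l ∈ range L : X l > ξ}`. -/
noncomputable def genInv {α : Type*} [MeasurableSpace α] (μ : Measure α) (L : α → ℝ)
    (ξ : ℝ) : ℝ :=
  sSup {lam : ℝ | lam ∈ Set.range L ∧ ξ < survival μ L lam}

/-- The plateau mass `Δ(r) = μ {z : L z = r}` (as a real number). -/
noncomputable def plateau {α : Type*} [MeasurableSpace α] (μ : Measure α) (L : α → ℝ)
    (t : ℝ) : ℝ :=
  (μ {z | L z = t}).toReal

/-- The non-strict survival function `ψ(r) = μ {z : L z ≥ r}` (as a real number). -/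
noncomputable def psi {α : Type*} [MeasurableSpace α] (μ : Measure α) (L : α → ℝ)
    (t : ℝ) : ℝ :=
  (μ {z | t ≤ L z}).toReal

section Aux

variable {α : Type*} [MeasurableSpace α] (μ : Measure α) [IsProbabilityMeasure μ] (L : α → ℝ)

lemma ofReal_survival (l : ℝ) : ENNReal.ofReal (survival μ L l) = μ {z | l < L z} :=
  ENNReal.ofReal_toReal (measure_ne_top μ _)

lemma survival_nonneg (l : ℝ) : 0 ≤ survival μ L l := ENNReal.toReal_nonneg

lemma survival_le_one (l : ℝ) : survival μ L l ≤ 1 := by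
  have h := ENNReal.toReal_mono (measure_ne_top μ Set.univ)
    (measure_mono (Set.subset_univ {z | l < L z}))
  simpa [survival, measure_univ] using h

lemma survival_anti : Antitone (survival μ L) := fun l l' h =>
  ENNReal.toReal_mono (measure_ne_top μ _)
    (measure_mono fun z hz => lt_of_le_of_lt h hz)

lemma measurable_survival : Measurable (survival μ L) :=
  (survival_anti μ L).measurable

lemma psi_split (hL : Measurable L) (t : ℝ) :
    μ {z | t ≤ L z} = μ {z | t < L z} + μ {z | L z = t} := by
  have hset : {z | t ≤ L z} = {z | t < L z} ∪ {z | L z = t} := by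
    ext z
    simp only [Set.mem_setOf_eq, Set.mem_union]
    constructor
    · intro h
      rcases lt_or_eq_of_le h with h' | h'
      · exact Or.inl h'
      · exact Or.inr h'.symm
    · rintro (h | h)
      · exact h.le
      · exact h.ge
  rw [hset, measure_union _ (show MeasurableSet {z | L z = t} from hL (measurableSet_singleton t))]
  exact Set.disjoint_left.mpr fun z hz1 hz2 => absurd (hz2 ▸ hz1) (lt_irrefl t)

lemma psi_eq_iInf (hL : Measurable L) (t : ℝ) :
    μ {z | t ≤ L z} = ⨅ n : ℕ, μ {z | t - 1 / (n + 1) < L z} := by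
  have hset : {z | t ≤ L z} = ⋂ n : ℕ, {z | t - 1 / (n + 1 : ℝ) < L z} := by
    ext z
    simp only [Set.mem_setOf_eq, Set.mem_iInter]
    constructor
    · intro h n
      have : (0 : ℝ) < 1 / (n + 1) := by positivity
      linarith
    · intro h
      by_contra hc
      push_neg at hc
      obtain ⟨n, hn⟩ := exists_nat_one_div_lt (sub_pos.mpr hc)
      have := h n
      linarith
  rw [hset]
  refine Antitone.measure_iInter ?_ ?_ ?_
  · intro n m hnm z hz
    simp only [Set.mem_setOf_eq] at hz ⊢
    have h1 : (1 : ℝ) / (m + 1) ≤ 1 / (n + 1) := by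
      apply one_div_le_one_div_of_le (by positivity)
      exact_mod_cast add_le_add_left (Nat.cast_le.mpr hnm) 1
    linarith
  · intro n
    exact (show MeasurableSet {z | t - 1 / (n + 1 : ℝ) < L z} from
      hL measurableSet_Ioi).nullMeasurableSet
  · exact ⟨0, measure_ne_top μ _⟩

lemma lt_eq_iSup (t : ℝ) :
    μ {z | t < L z} = ⨆ n : ℕ, μ {z | t + 1 / (n + 1) < L z} := by
  have hset : {z | t < L z} = ⋃ n : ℕ, {z | t + 1 / (n + 1 : ℝ) < L z} := by
    ext z
    simp only [Set.mem_setOf_eq, Set.mem_iUnion]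
    constructor
    · intro h
      obtain ⟨n, hn⟩ := exists_nat_one_div_lt (sub_pos.mpr h)
      exact ⟨n, by linarith⟩
    · rintro ⟨n, hn⟩
      have : (0 : ℝ) < 1 / (n + 1) := by positivity
      linarith
  rw [hset]
  refine Monotone.measure_iUnion ?_
  intro n m hnm z hz
  simp only [Set.mem_setOf_eq] at hz ⊢
  have h1 : (1 : ℝ) / (m + 1) ≤ 1 / (n + 1) := by
    apply one_div_le_one_div_of_le (by positivity)
    exact_mod_cast add_le_add_left (Nat.cast_le.mpr hnm) 1
  linarith

end Aux

/-- Under the finite-atom assumption, the pushforward measure `Φ_#μ`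
on [0,1] is the sum of the point masses `Σ Δ_i · δ_(α_i)` and the restriction of
Lebesgue measure to `[0,1] \\ ⋃ [α_i, α_i + Δ_i]`. -/
theorem pushforward_eq_diracSum_add_restrict
    {d : ℕ} (Ω : Set (Fin d → ℝ)) (μ : Measure Ω) [IsProbabilityMeasure μ]
    (L : Ω → ℝ) (hL : Measurable L)
    (hbd : ∃ a b : ℝ, ∀ x, a ≤ L x ∧ L x ≤ b)
    (N : ℕ) (r : Fin N → ℝ) (hr : StrictMono r)
    (hatom : ∀ i : Fin N, 0 < μ {z | L z = r i})
    (hnonatom : ∀ s : ℝ, s ∉ Set.range r → μ {z | L z = s} = 0) :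
    Measure.map (fun x => survival μ L (L x)) μ
      = (∑ i : Fin N, μ {z | L z = r i} • Measure.dirac (survival μ L (r i)))
        + volume.restrict (Set.Icc (0:ℝ) 1 \
            ⋃ i : Fin N,
              Set.Icc (survival μ L (r i)) (survival μ L (r i) + plateau μ L (r i))) := by
  classical
  obtain ⟨a, b, hab⟩ := hbd
  set X := survival μ L with hXdef
  set P := plateau μ L with hPdef
  have hXanti : Antitone X := survival_anti μ L
  have hX0 : ∀ l, 0 ≤ X l := survival_nonneg μ L
  have hX1 : ∀ l, X l ≤ 1 := survival_le_one μ L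
  have hXe : ∀ l, ENNReal.ofReal (X l) = μ {z | l < L z} := ofReal_survival μ L
  have hmeasΦ : Measurable fun x => X (L x) := (measurable_survival μ L).comp hL
  have hP0 : ∀ l, 0 ≤ P l := fun l => ENNReal.toReal_nonneg
  have hPe : ∀ l, ENNReal.ofReal (P l) = μ {z | L z = l} := fun l =>
    ENNReal.ofReal_toReal (measure_ne_top μ _)
  have hψe : ∀ l, ENNReal.ofReal (X l + P l) = μ {z | l ≤ L z} := by
    intro l
    rw [ENNReal.ofReal_add (hX0 l) (hP0 l), hXe, hPe, psi_split μ L hL]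
  have hψ1 : ∀ l, X l + P l ≤ 1 := by
    intro l
    have h1 : ENNReal.ofReal (X l + P l) ≤ ENNReal.ofReal 1 := by
      rw [hψe, ENNReal.ofReal_one, ← measure_univ (μ := μ)]
      exact measure_mono (subset_univ _)
    have h2 : 0 ≤ X l + P l := add_nonneg (hX0 l) (hP0 l)
    exact (ENNReal.ofReal_le_ofReal_iff zero_le_one).mp h1
  have hψα : ∀ i j : Fin N, i < j → X (r j) + P (r j) ≤ X (r i) := by
    intro i j hij
    have hsub : {z | r j ≤ L z} ⊆ {z | r i < L z} := fun z hz =>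
      lt_of_lt_of_le (hr hij) hz
    have h1 : ENNReal.ofReal (X (r j) + P (r j)) ≤ ENNReal.ofReal (X (r i)) := by
      rw [hψe, hXe]; exact measure_mono hsub
    exact (ENNReal.ofReal_le_ofReal_iff (hX0 _)).mp h1
  -- the key setup lemma: description of {x | X (L x) ≤ t}
  have hsetup : ∀ t : ℝ, 0 ≤ t → t < 1 → ∃ β : ℝ,
      μ {x | X (L x) ≤ t} = μ {z | β ≤ L z} ∧ X β ≤ t ∧
      ENNReal.ofReal t ≤ μ {z | β ≤ L z} ∧ (∀ l, X l ≤ t → β ≤ l) := by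
    intro t ht0 ht1
    set S := {l : ℝ | X l ≤ t} with hS
    have hbS : b ∈ S := by
      have hempty : {z | b < L z} = ∅ := by
        ext z; simp only [mem_setOf_eq, mem_empty_iff_false, iff_false, not_lt]
        exact (hab z).2
      have : X b = 0 := by
        rw [hXdef]; simp [survival, hempty]
      simp only [hS, mem_setOf_eq, this]; exact ht0
    have hSne : S.Nonempty := ⟨b, hbS⟩
    have hSb : BddBelow S := by
      refine ⟨a, fun l hl => ?_⟩
      by_contra hc
      push_neg at hc
      have huniv : {z | l < L z} = univ := by
        ext z; simp only [mem_setOf_eq, mem_univ, iff_true]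
        exact lt_of_lt_of_le hc (hab z).1
      have : X l = 1 := by
        rw [hXdef]; simp [survival, huniv]
      simp only [hS, mem_setOf_eq, this] at hl
      linarith
    have hSup : ∀ ⦃l l'⦄, l ∈ S → l ≤ l' → l' ∈ S := fun l l' hl h =>
      le_trans (hXanti h) hl
    set β := sInf S with hβ
    have hβle : ∀ l, X l ≤ t → β ≤ l := fun l hl => csInf_le hSb hl
    have hXβ : X β ≤ t := by
      have hXeβ : μ {z | β < L z} ≤ ENNReal.ofReal t := by
        rw [lt_eq_iSup μ L β]
        refine iSup_le fun n => ?_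
        have hmem : β + 1 / (n + 1 : ℝ) ∈ S := by
          obtain ⟨s, hs, hslt⟩ := (csInf_lt_iff hSb hSne).mp
            (lt_add_of_pos_right β (by positivity : (0:ℝ) < 1 / (n + 1)))
          exact hSup hs hslt.le
        rw [← hXe]
        exact ENNReal.ofReal_le_ofReal hmem
      have h2 := ENNReal.toReal_mono ENNReal.ofReal_ne_top ((hXe β).symm ▸ hXeβ)
      rwa [ENNReal.toReal_ofReal (hX0 β), ENNReal.toReal_ofReal ht0] at h2
    have hpre : {x | X (L x) ≤ t} = {x | β ≤ L x} := by
      ext x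
      simp only [mem_setOf_eq]
      exact ⟨fun h => hβle _ h, fun h => le_trans (hXanti h) hXβ⟩
    have hge : ENNReal.ofReal t ≤ μ {z | β ≤ L z} := by
      rw [psi_eq_iInf μ L hL β]
      refine le_iInf fun n => ?_
      have hlt : ¬ X (β - 1 / (n + 1 : ℝ)) ≤ t := by
        intro h
        have := hβle _ h
        have hpos : (0:ℝ) < 1 / (n + 1) := by positivity
        linarith
      rw [← hXe]
      exact ENNReal.ofReal_le_ofReal (not_le.mp hlt).le
    exact ⟨β, by rw [hpre], hXβ, hge, hβle⟩
  -- case A: t in an atom plateau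
  have keyA : ∀ (t : ℝ) (i : Fin N), X (r i) ≤ t → t < X (r i) + P (r i) →
      μ {x | X (L x) ≤ t} = ENNReal.ofReal (X (r i) + P (r i)) := by
    intro t i hit hti
    have ht0 : 0 ≤ t := le_trans (hX0 _) hit
    have ht1 : t < 1 := lt_of_lt_of_le hti (hψ1 _)
    obtain ⟨β, hμeq, hXβ, hge, hβle⟩ := hsetup t ht0 ht1
    have h1 : β ≤ r i := hβle _ hit
    have h2 : r i ≤ β := by
      by_contra hc
      push_neg at hc
      have hsub : {z | r i ≤ L z} ⊆ {z | β < L z} := fun z hz =>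
        lt_of_lt_of_le hc hz
      have h3 : ENNReal.ofReal (X (r i) + P (r i)) ≤ ENNReal.ofReal (X β) := by
        rw [hψe, hXe]; exact measure_mono hsub
      have h4 : X (r i) + P (r i) ≤ X β := (ENNReal.ofReal_le_ofReal_iff (hX0 _)).mp h3
      linarith
    rw [hμeq, show β = r i from le_antisymm h1 h2, hψe]
  -- case B: t not in any atom plateau
  have keyB : ∀ t : ℝ, 0 ≤ t → (∀ i : Fin N, ¬(X (r i) ≤ t ∧ t < X (r i) + P (r i))) →
      μ {x | X (L x) ≤ t} = ENNReal.ofReal (min t 1) := by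
    intro t ht0 hnot
    rcases lt_or_ge t 1 with ht1 | ht1
    · rw [min_eq_left ht1.le]
      obtain ⟨β, hμeq, hXβ, hge, hβle⟩ := hsetup t ht0 ht1
      rw [hμeq]
      refine le_antisymm ?_ hge
      by_cases hβr : β ∈ Set.range r
      · obtain ⟨i, hi⟩ := hβr
        have hψt : X (r i) + P (r i) ≤ t := by
          have h1 := hnot i
          push_neg at h1
          exact h1 (hi ▸ hXβ)
        rw [← hψe]
        exact ENNReal.ofReal_le_ofReal (hi ▸ hψt)
      · have h0 : μ {z | L z = β} = 0 := hnonatom β hβr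
        rw [psi_split μ L hL, h0, add_zero, ← hXe]
        exact ENNReal.ofReal_le_ofReal hXβ
    · rw [min_eq_right ht1]
      have huniv : {x | X (L x) ≤ t} = univ :=
        eq_univ_of_forall fun x => le_trans (hX1 _) ht1
      rw [huniv, measure_univ, ENNReal.ofReal_one]
  -- Now prove the measure equality via Iic sets
  haveI : IsProbabilityMeasure (Measure.map (fun x => X (L x)) μ) :=
    Measure.isProbabilityMeasure_map hmeasΦ.aemeasurable
  refine Measure.ext_of_Iic _ _ fun t => ?_
  rw [Measure.map_apply hmeasΦ measurableSet_Iic]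
  have hpre : (fun x => X (L x)) ⁻¹' Iic t = {x | X (L x) ≤ t} := rfl
  rw [hpre, Measure.add_apply, Measure.finset_sum_apply,
    Measure.restrict_apply measurableSet_Iic]
  simp only [Measure.smul_apply, Measure.dirac_apply' _ measurableSet_Iic,
    Set.indicator_apply, Set.mem_Iic, Pi.one_apply, smul_eq_mul, mul_ite, mul_one, mul_zero]
  rcases lt_or_ge t 0 with htneg | ht0
  · -- t < 0 : both sides vanish
    have h1 : {x | X (L x) ≤ t} = (∅ : Set Ω) := by
      ext x
      simp only [mem_setOf_eq, mem_empty_iff_false, iff_false, not_le]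
      exact lt_of_lt_of_le htneg (hX0 _)
    have h2 : Iic t ∩ (Icc (0:ℝ) 1 \ ⋃ i, Icc (X (r i)) (X (r i) + P (r i))) = ∅ := by
      refine eq_empty_of_forall_notMem fun z hz => ?_
      obtain ⟨hz1, ⟨hz2, _⟩, _⟩ := hz
      have hzt : z ≤ t := hz1
      have hz0 : (0:ℝ) ≤ z := hz2
      linarith
    have h3 : ∀ i : Fin N, ¬ X (r i) ≤ t := fun i h =>
      absurd (le_trans (hX0 _) h) (not_le.mpr htneg)
    rw [h1, h2, measure_empty, measure_empty, add_zero]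
    exact (Finset.sum_eq_zero fun i _ => if_neg (h3 i)).symm
  · -- t ≥ 0
    set c := min t 1 with hc
    have hc0 : (0:ℝ) ≤ c := le_min ht0 zero_le_one
    have hct : c ≤ t := min_le_left _ _
    have hIic : Iic t ∩ (Icc (0:ℝ) 1 \ ⋃ i, Icc (X (r i)) (X (r i) + P (r i)))
        = Icc 0 c \ ⋃ i, Icc (X (r i)) (X (r i) + P (r i)) := by
      ext z
      simp only [mem_inter_iff, mem_Iic, mem_diff, mem_Icc, le_min_iff, hc]
      constructor
      · rintro ⟨h1, ⟨h2, h3⟩, h4⟩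
        exact ⟨⟨h2, h1, h3⟩, h4⟩
      · rintro ⟨⟨h2, h1, h3⟩, h4⟩
        exact ⟨h1, ⟨h2, h3⟩, h4⟩
    rw [hIic]
    set V := ⋃ i : Fin N, Ioc (X (r i)) (X (r i) + P (r i)) with hV
    have hnull : volume (({0} : Set ℝ) ∪ ⋃ i : Fin N, {X (r i)}) = 0 :=
      measure_union_null Real.volume_singleton (measure_iUnion_null fun i => Real.volume_singleton)
    have hUV : volume (Icc 0 c \ ⋃ i, Icc (X (r i)) (X (r i) + P (r i)))
        = volume (Ioc 0 c \ V) := by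
      refine measure_congr (MeasureTheory.ae_eq_set.mpr ⟨?_, ?_⟩)
      · refine measure_mono_null (fun z hz => ?_) hnull
        obtain ⟨⟨⟨hz0, hzc⟩, hzU⟩, hznot⟩ := hz
        have hzV : z ∉ V := by
          intro hzV
          refine hzU ?_
          obtain ⟨i, hi⟩ := mem_iUnion.mp hzV
          exact mem_iUnion.mpr ⟨i, Ioc_subset_Icc_self hi⟩
        have hzIoc : z ∉ Ioc (0:ℝ) c := fun h => hznot ⟨h, hzV⟩
        have hz0' : z = 0 := by
          by_contra hcon
          have hzpos : 0 < z := lt_of_le_of_ne hz0 (Ne.symm hcon)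
          exact hzIoc ⟨hzpos, hzc⟩
        exact mem_union_left _ (by simp [hz0'])
      · refine measure_mono_null (fun z hz => ?_) hnull
        obtain ⟨⟨⟨hz0, hzc⟩, hzV⟩, hznot⟩ := hz
        have hzIcc : z ∈ Icc (0:ℝ) c := ⟨hz0.le, hzc⟩
        have hzU : z ∈ ⋃ i, Icc (X (r i)) (X (r i) + P (r i)) := by
          by_contra hcon
          exact hznot ⟨hzIcc, hcon⟩
        obtain ⟨i, hi1, hi2⟩ := mem_iUnion.mp hzU
        have : z = X (r i) := by
          by_contra hcon
          exact hzV (mem_iUnion.mpr ⟨i, ⟨lt_of_le_of_ne hi1 (Ne.symm hcon), hi2⟩⟩)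
        exact mem_union_right _ (mem_iUnion.mpr ⟨i, by simp [this]⟩)
    rw [hUV]
    have hVmeas : MeasurableSet V := MeasurableSet.iUnion fun i => measurableSet_Ioc
    have hWI : volume (Ioc 0 c \ V) + volume (Ioc 0 c ∩ V) = ENNReal.ofReal c := by
      rw [measure_diff_add_inter _ hVmeas, Real.volume_Ioc, sub_zero]
    have hdisj : Pairwise (Function.onFun Disjoint fun i : Fin N =>
        Ioc (0:ℝ) c ∩ Ioc (X (r i)) (X (r i) + P (r i))) := by
      intro i j hij
      refine Disjoint.mono inter_subset_right inter_subset_right ?_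
      rw [Set.Ioc_disjoint_Ioc]
      rcases hij.lt_or_gt with h | h
      · exact le_trans (min_le_right _ _) (le_trans (hψα i j h) (le_max_left _ _))
      · exact le_trans (min_le_left _ _) (le_trans (hψα j i h) (le_max_right _ _))
    have hI : volume (Ioc 0 c ∩ V)
        = ∑ i : Fin N, ENNReal.ofReal (min c (X (r i) + P (r i)) - X (r i)) := by
      rw [hV, inter_iUnion,
        measure_iUnion hdisj fun i => measurableSet_Ioc.inter measurableSet_Ioc]
      rw [tsum_fintype]
      refine Finset.sum_congr rfl fun i _ => ?_
      rw [Set.Ioc_inter_Ioc, Real.volume_Ioc, sup_eq_right.mpr (hX0 (r i))]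
    have hIne : volume (Ioc 0 c ∩ V) ≠ ⊤ := by
      refine ne_top_of_le_ne_top ?_ (measure_mono inter_subset_left)
      rw [Real.volume_Ioc]
      exact ENNReal.ofReal_ne_top
    refine (ENNReal.add_left_inj hIne).mp ?_
    rw [add_assoc, hWI, hI]
    by_cases hcase : ∃ i : Fin N, X (r i) ≤ t ∧ t < X (r i) + P (r i)
    · obtain ⟨i, hit, hti⟩ := hcase
      have hct' : c = t := min_eq_left (le_of_lt (lt_of_lt_of_le hti (hψ1 _)))
      rw [keyA t i hit hti, hct']
      have hfg : ∀ j ∈ Finset.univ.erase i,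
          ENNReal.ofReal (min t (X (r j) + P (r j)) - X (r j))
            = (if X (r j) ≤ t then μ {z | L z = r j} else 0) := by
        intro j hj
        have hji : j ≠ i := Finset.ne_of_mem_erase hj
        rcases hji.lt_or_gt with h | h
        · have h1 : t < X (r j) := lt_of_lt_of_le hti (hψα j i h)
          rw [if_neg (not_le.mpr h1)]
          refine ENNReal.ofReal_eq_zero.mpr ?_
          have h2 : min t (X (r j) + P (r j)) ≤ t := min_le_left _ _
          linarith
        · have h1 : X (r j) + P (r j) ≤ t := le_trans (hψα i j h) hit
          have h2 : X (r j) ≤ t := le_trans (le_add_of_nonneg_right (hP0 _)) h1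
          rw [if_pos h2, min_eq_right h1, add_sub_cancel_left, hPe]
      rw [← Finset.add_sum_erase _ _ (Finset.mem_univ i),
        ← Finset.add_sum_erase _
          (fun j => if X (r j) ≤ t then μ {z | L z = r j} else 0) (Finset.mem_univ i),
        Finset.sum_congr rfl hfg, if_pos hit, min_eq_left hti.le,
        ENNReal.ofReal_add (hX0 _) (hP0 _), hPe]
      have hsplit : ENNReal.ofReal (X (r i)) + ENNReal.ofReal (t - X (r i))
          = ENNReal.ofReal t := by
        rw [← ENNReal.ofReal_add (hX0 _) (sub_nonneg.mpr hit)]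
        ring_nf
      rw [← hsplit]
      ring
    · push_neg at hcase
      rw [keyB t ht0 (fun i h => absurd h.2 (not_lt.mpr (hcase i h.1)))]
      have hfg : ∀ j ∈ (Finset.univ : Finset (Fin N)),
          ENNReal.ofReal (min c (X (r j) + P (r j)) - X (r j))
            = (if X (r j) ≤ t then μ {z | L z = r j} else 0) := by
        intro j _
        by_cases hj : X (r j) ≤ t
        · have h1 : X (r j) + P (r j) ≤ c := by
            rcases le_or_gt 1 t with h | h
            · rw [hc, min_eq_right h]
              exact hψ1 _
            · rw [hc, min_eq_left h.le]
              exact hcase j hj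
          rw [if_pos hj, min_eq_right h1, add_sub_cancel_left, hPe]
        · rw [if_neg hj]
          refine ENNReal.ofReal_eq_zero.mpr ?_
          push_neg at hj
          have h2 : min c (X (r j) + P (r j)) ≤ c := min_le_left _ _
          linarith
      rw [Finset.sum_congr rfl hfg, hc]
      exact add_comm _ _
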